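/- Let R be a commutative ring, S ⊆ reg(R) a multiplicatively closed subset of non-zero-divisors, and I an S-n-ideal of R with S-element s. Then (I : s) is an n-ideal of R. -/

import Mathlib

/-- `I` is an `S`-`n`-ideal: `I` is disjoint from `S` and there is `s ∈ S` such that
whenever `a * b ∈ I` and `s * a` is not nilpotent, then `s * b ∈ I`. -/
def IsSnIdeal {R : Type*} [CommRing R] (S : Set R) (I : Ideal R) : Prop :=
  Disjoint S (I : Set R) ∧
    ∃ s ∈ S, ∀ a b : R, a * b ∈ I → s * a ∉ nilradical R → s * b ∈ I

/-- `I` is an `n`-ideal: `I` is proper and `a * b ∈ I` with `a` not nilpotent implies `b ∈ I`. -/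
def IsNIdeal {R : Type*} [CommRing R] (I : Ideal R) : Prop :=
  I ≠ ⊤ ∧ ∀ a b : R, a * b ∈ I → a ∉ nilradical R → b ∈ I

/-- `I` is an `S`-prime ideal. -/
def IsSPrime {R : Type*} [CommRing R] (S : Set R) (I : Ideal R) : Prop :=
  Disjoint S (I : Set R) ∧
    ∃ s ∈ S, ∀ a b : R, a * b ∈ I → s * a ∈ I ∨ s * b ∈ I
theorem stmt_6 {R : Type*} [CommRing R] (S : Submonoid R) (I : Ideal R)
    (hreg : (S : Set R) ⊆ {r : R | r ∈ nonZeroDivisors R})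
    (hdisj : Disjoint (S : Set R) (I : Set R)) (s : R) (hs : s ∈ S)
    (hsI : ∀ a b : R, a * b ∈ I → s * a ∉ nilradical R → s * b ∈ I) :
    IsNIdeal (I.colon (Ideal.span {s})) := by
  have hsr : s ∈ nonZeroDivisors R := hreg hs
  have hsI' : s ∉ (I : Set R) := fun h => Set.disjoint_left.mp hdisj hs h
  have key : ∀ x : R, s * x ∈ nilradical R → x ∈ nilradical R := by
    intro x hx
    rw [mem_nilradical] at hx ⊢
    obtain ⟨n, hn⟩ := hx
    refine ⟨n, ?_⟩
    have : s ^ n * x ^ n = 0 := by rw [← mul_pow]; exact hn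
    have hsn : s ^ n ∈ nonZeroDivisors R := pow_mem hsr n
    exact hsn.2 _ (by rwa [mul_comm] at this)
  have hsnil : s ∉ nilradical R := by
    intro h
    rw [mem_nilradical] at h
    obtain ⟨n, hn⟩ := h
    -- s ^ n = 0, but s ^ n is a nonzerodivisor, so ring is trivial
    have hsn : s ^ n ∈ nonZeroDivisors R := pow_mem hsr n
    have h1 : (1 : R) = 0 := by
      have := hsn.2 1 (by rw [one_mul, hn])
      simpa using this
    exact hsI' (by simp [Ideal.eq_top_iff_one I |>.mpr (by rw [h1]; exact I.zero_mem)])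
  constructor
  · intro h
    have h1 : (1 : R) ∈ I.colon (Ideal.span {s}) := h ▸ Submodule.mem_top
    rw [Ideal.mem_colon_span_singleton, one_mul] at h1
    exact hsI' h1
  · intro a b hab ha
    rw [Ideal.mem_colon_span_singleton] at hab ⊢
    have hsa : s * a ∉ nilradical R := fun h => ha (key a h)
    have hsas : s * (a * s) ∉ nilradical R := by
      intro h
      have := key (a * s) h
      rw [mul_comm] at this
      exact ha (key a this)
    have h2 : s * b ∈ I := hsI (a * s) b (by rw [show a * s * b = a * b * s from by ring]; exact hab) hsas
    rwa [mul_comm]
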